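/- Let W ∈ ℝ^{n×n} and m > 0 satisfy (I − W) ⪰ mI, let U ∈ ℝ^{n×d}, x ∈ ℝ^d and b ∈ ℝⁿ. Then there exists a unique z⋆ ∈ ℝⁿ satisfying z⋆ = max(W z⋆ + U x + b, 0), where max(·, 0) is applied componentwise (the ReLU). That is, the ReLU monotone operator equilibrium network has exactly one equilibrium point. -/

import Mathlib

open Matrix

private lemma exists_unique_fixedPoint_of_sq_contraction {n : ℕ}
    (F : (Fin n → ℝ) → (Fin n → ℝ)) (k2 : ℝ) (hk2nn : 0 ≤ k2) (hk2lt : k2 < 1)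
    (hF : ∀ z w, ∑ i, (F z i - F w i) ^ 2 ≤ k2 * ∑ i, (z i - w i) ^ 2) :
    ∃! z : Fin n → ℝ, F z = z := by
  let E := EuclideanSpace ℝ (Fin n)
  let F' : E → E := fun z => WithLp.toLp 2 (F (WithLp.ofLp z))
  set k : NNReal := ⟨Real.sqrt k2, Real.sqrt_nonneg _⟩ with hk
  have hk1 : k < 1 := by
    rw [← NNReal.coe_lt_coe]
    show Real.sqrt k2 < 1
    rw [show (1:ℝ) = Real.sqrt 1 by simp]
    exact Real.sqrt_lt_sqrt hk2nn hk2lt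
  have hdist : ∀ z w : E, dist (F' z) (F' w) ≤ (k : ℝ) * dist z w := by
    intro z w
    rw [EuclideanSpace.dist_eq, EuclideanSpace.dist_eq]
    have h1 : ∑ i, dist (F' z i) (F' w i) ^ 2 ≤ k2 * ∑ i, (z i - w i) ^ 2 := by
      have : ∀ i, dist (F' z i) (F' w i) ^ 2 = (F (z : Fin n → ℝ) i - F (w : Fin n → ℝ) i) ^ 2 := by
        intro i; rw [Real.dist_eq, sq_abs]
      calc ∑ i, dist (F' z i) (F' w i) ^ 2
          = ∑ i, (F (z : Fin n → ℝ) i - F (w : Fin n → ℝ) i) ^ 2 :=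
            Finset.sum_congr rfl fun i _ => this i
        _ ≤ k2 * ∑ i, ((z : Fin n → ℝ) i - (w : Fin n → ℝ) i) ^ 2 := hF _ _
    have h2 : ∑ i, dist (z i) (w i) ^ 2 = ∑ i, (z i - w i) ^ 2 :=
      Finset.sum_congr rfl fun i _ => by rw [Real.dist_eq, sq_abs]
    rw [h2]
    calc Real.sqrt (∑ i, dist (F' z i) (F' w i) ^ 2)
        ≤ Real.sqrt (k2 * ∑ i, (z i - w i) ^ 2) := Real.sqrt_le_sqrt h1
      _ = Real.sqrt k2 * Real.sqrt (∑ i, (z i - w i) ^ 2) := Real.sqrt_mul hk2nn _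
      _ = (k : ℝ) * Real.sqrt (∑ i, (z i - w i) ^ 2) := rfl
  have hcontr : ContractingWith k F' := ⟨hk1, LipschitzWith.of_dist_le_mul hdist⟩
  obtain ⟨z₀, hfix, huniq⟩ : ∃ z₀ : E, F' z₀ = z₀ ∧ ∀ y : E, F' y = y → y = z₀ :=
    ⟨ContractingWith.fixedPoint F' hcontr, hcontr.fixedPoint_isFixedPt,
      fun y hy => hcontr.fixedPoint_unique hy⟩
  exact ⟨z₀.ofLp, congrArg WithLp.ofLp hfix, fun y hy => (congrArg WithLp.ofLp (huniq (WithLp.toLp 2 y) (congrArg (WithLp.toLp 2) hy)) :)⟩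

private lemma relu_shift {α a v : ℝ} (hα : 0 < α) :
    a = max v 0 ↔ a = max (a - α * (a - v)) 0 := by
  constructor
  · intro h
    rcases le_or_gt v 0 with hv | hv
    · have ha : a = 0 := by rw [h, max_eq_right hv]
      subst ha
      have hav : α * v ≤ 0 := by nlinarith
      rw [show (0:ℝ) - α * (0 - v) = α * v by ring, max_eq_right hav]
    · have ha : a = v := by rw [h, max_eq_left hv.le]
      subst ha
      rw [show a - α * (a - a) = a by ring, max_eq_left hv.le]
  · intro h
    have ha0 : 0 ≤ a := h ▸ le_max_right _ _
    rcases ha0.lt_or_eq with ha | ha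
    · rcases le_or_gt (a - α * (a - v)) 0 with hx | hx
      · rw [max_eq_right hx] at h; linarith
      · rw [max_eq_left hx.le] at h
        have hav : α * (a - v) = 0 := by linarith
        have hv : a = v := by
          rcases mul_eq_zero.mp hav with h' | h'
          · exact absurd h' (ne_of_gt hα)
          · linarith
        rw [← hv, max_eq_left ha.le]
    · have hx : a - α * (a - v) ≤ 0 := by
        by_contra hc
        push_neg at hc
        rw [max_eq_left hc.le] at h
        nlinarith
      have hv : v ≤ 0 := by nlinarith
      rw [max_eq_right hv]; exact ha.symm

theorem relu_monDEQ_unique_equilibrium (n d : ℕ)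
    (W : Matrix (Fin n) (Fin n) ℝ) (m : ℝ) (hm : 0 < m)
    (hmono : ((1/2 : ℝ) • ((1 - W) + (1 - W)ᵀ) -
        m • (1 : Matrix (Fin n) (Fin n) ℝ)).PosSemidef)
    (U : Matrix (Fin n) (Fin d) ℝ) (x : Fin d → ℝ) (b : Fin n → ℝ) :
    ∃! zs : Fin n → ℝ, zs = fun i => max ((W.mulVec zs + U.mulVec x + b) i) 0 := by
  classical
  rcases Nat.eq_zero_or_pos n with hn | hn
  · subst hn
    refine ⟨fun i => i.elim0, ?_, ?_⟩
    · funext i; exact i.elim0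
    · intro y _; funext i; exact i.elim0
  set c : Fin n → ℝ := U.mulVec x + b with hc
  set A : Matrix (Fin n) (Fin n) ℝ := 1 - W with hA
  -- PSD inequality : m * ∑ v² ≤ ∑ v (Av)
  have hAq : ∀ v : Fin n → ℝ, m * (∑ i, v i ^ 2) ≤ ∑ i, v i * (A *ᵥ v) i := by
    intro v
    have h0 := hmono.dotProduct_mulVec_nonneg v
    have hstar : star v = v := by funext i; exact star_trivial _
    rw [hstar] at h0
    have hT : v ⬝ᵥ Aᵀ *ᵥ v = v ⬝ᵥ A *ᵥ v := by
      rw [dotProduct_mulVec, vecMul_transpose, dotProduct_comm]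
    simp only [sub_mulVec, add_mulVec, smul_mulVec, one_mulVec,
      dotProduct_sub, dotProduct_add, dotProduct_smul, smul_eq_mul,
      Pi.smul_apply] at h0
    rw [hT] at h0
    have hdv : v ⬝ᵥ v = ∑ i, v i ^ 2 := by
      simp [dotProduct, pow_two]
    have hda : v ⬝ᵥ A *ᵥ v = ∑ i, v i * (A *ᵥ v) i := by
      simp [dotProduct]
    rw [hdv, hda] at h0
    linarith
  set C : ℝ := ∑ i, ∑ j, A i j ^ 2 with hCdef
  have hCS : ∀ v : Fin n → ℝ, ∑ i, ((A *ᵥ v) i) ^ 2 ≤ C * ∑ j, v j ^ 2 := by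
    intro v
    have hrow : ∀ i : Fin n, ((A *ᵥ v) i) ^ 2 ≤ (∑ j, A i j ^ 2) * ∑ j, v j ^ 2 := by
      intro i
      have : (A *ᵥ v) i = ∑ j, A i j * v j := by simp [Matrix.mulVec, dotProduct]
      rw [this]
      exact Finset.sum_mul_sq_le_sq_mul_sq _ _ _
    calc ∑ i, ((A *ᵥ v) i) ^ 2 ≤ ∑ i, (∑ j, A i j ^ 2) * ∑ j, v j ^ 2 :=
          Finset.sum_le_sum fun i _ => hrow i
      _ = C * ∑ j, v j ^ 2 := by rw [← Finset.sum_mul]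
  have hmC : m ^ 2 ≤ C := by
    set e : Fin n → ℝ := Pi.single ⟨0, hn⟩ 1 with he
    have hesum : ∑ i, e i ^ 2 = 1 := by
      simp [he, Pi.single_apply, Finset.sum_ite_eq']
    have h1 : m ≤ ∑ i, e i * (A *ᵥ e) i := by
      have := hAq e
      rw [hesum] at this; linarith
    have h2 : (∑ i, e i * (A *ᵥ e) i) ^ 2 ≤ (∑ i, e i ^ 2) * ∑ i, ((A *ᵥ e) i) ^ 2 :=
      Finset.sum_mul_sq_le_sq_mul_sq _ _ _
    have h3 : ∑ i, ((A *ᵥ e) i) ^ 2 ≤ C := by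
      have := hCS e
      rw [hesum] at this; linarith
    nlinarith
  have hCpos : 0 < C := lt_of_lt_of_le (by positivity) hmC
  set α : ℝ := m / C with hαdef
  have hαpos : 0 < α := div_pos hm hCpos
  have hk2nn : (0:ℝ) ≤ 1 - m ^ 2 / C := by
    have : m ^ 2 / C ≤ 1 := (div_le_one hCpos).mpr hmC
    linarith
  have hk2lt : 1 - m ^ 2 / C < 1 := by
    have : 0 < m ^ 2 / C := div_pos (by positivity) hCpos
    linarith
  -- squared contraction estimate for the linear part
  have hsq : ∀ u : Fin n → ℝ,
      ∑ i, (u i - α * (A *ᵥ u) i) ^ 2 ≤ (1 - m ^ 2 / C) * ∑ i, u i ^ 2 := by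
    intro u
    have hexp : ∑ i, (u i - α * (A *ᵥ u) i) ^ 2 =
        (∑ i, u i ^ 2) - 2 * α * (∑ i, u i * (A *ᵥ u) i)
          + α ^ 2 * (∑ i, ((A *ᵥ u) i) ^ 2) := by
      rw [Finset.mul_sum, Finset.mul_sum, ← Finset.sum_sub_distrib, ← Finset.sum_add_distrib]
      exact Finset.sum_congr rfl fun i _ => by ring
    rw [hexp]
    have hPm : m * (∑ i, u i ^ 2) ≤ ∑ i, u i * (A *ᵥ u) i := hAq u
    have hQC : ∑ i, ((A *ᵥ u) i) ^ 2 ≤ C * ∑ i, u i ^ 2 := hCS u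
    have hSnn : (0:ℝ) ≤ ∑ i, u i ^ 2 := Finset.sum_nonneg fun i _ => sq_nonneg _
    have hkey : (∑ i, u i ^ 2) - 2 * α * (m * ∑ i, u i ^ 2)
        + α ^ 2 * (C * ∑ i, u i ^ 2) = (1 - m ^ 2 / C) * ∑ i, u i ^ 2 := by
      have hCne : C ≠ 0 := ne_of_gt hCpos
      rw [hαdef]; field_simp; ring
    have h1 : 2 * α * (m * ∑ i, u i ^ 2) ≤ 2 * α * ∑ i, u i * (A *ᵥ u) i :=
      mul_le_mul_of_nonneg_left hPm (by linarith)
    have h2 : α ^ 2 * (∑ i, ((A *ᵥ u) i) ^ 2) ≤ α ^ 2 * (C * ∑ i, u i ^ 2) :=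
      mul_le_mul_of_nonneg_left hQC (sq_nonneg α)
    linarith
  -- the damped map
  set F : (Fin n → ℝ) → (Fin n → ℝ) :=
    fun z => fun i => max (z i - α * ((A *ᵥ z) i - c i)) 0 with hF
  have hFcontr : ∀ z w : Fin n → ℝ,
      ∑ i, (F z i - F w i) ^ 2 ≤ (1 - m ^ 2 / C) * ∑ i, (z i - w i) ^ 2 := by
    intro z w
    have hstep : ∀ i, (F z i - F w i) ^ 2 ≤ ((z - w) i - α * (A *ᵥ (z - w)) i) ^ 2 := by
      intro i
      have hdiff : (z i - α * ((A *ᵥ z) i - c i)) - (w i - α * ((A *ᵥ w) i - c i))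
          = (z - w) i - α * (A *ᵥ (z - w)) i := by
        rw [Matrix.mulVec_sub]
        show _ = (z i - w i) - α * ((A *ᵥ z) i - (A *ᵥ w) i)
        ring
      have habs := abs_max_sub_max_le_abs
        (z i - α * ((A *ᵥ z) i - c i)) (w i - α * ((A *ᵥ w) i - c i)) 0
      rw [hdiff] at habs
      have hFzw : F z i - F w i
          = max (z i - α * ((A *ᵥ z) i - c i)) 0 - max (w i - α * ((A *ᵥ w) i - c i)) 0 := rfl
      rw [hFzw, ← sq_abs (max (z i - α * ((A *ᵥ z) i - c i)) 0
        - max (w i - α * ((A *ᵥ w) i - c i)) 0),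
        ← sq_abs ((z - w) i - α * (A *ᵥ (z - w)) i)]
      exact pow_le_pow_left₀ (abs_nonneg _) habs 2
    have h1 : ∑ i, (F z i - F w i) ^ 2 ≤ ∑ i, ((z - w) i - α * (A *ᵥ (z - w)) i) ^ 2 :=
      Finset.sum_le_sum fun i _ => hstep i
    have h2 := hsq (z - w)
    have h3 : ∑ i, ((z - w) i) ^ 2 = ∑ i, (z i - w i) ^ 2 := rfl
    rw [h3] at h2
    linarith
  obtain ⟨z₀, hfix, huniq⟩ :=
    exists_unique_fixedPoint_of_sq_contraction F (1 - m ^ 2 / C) hk2nn hk2lt hFcontr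
  -- equivalence of the two fixed point equations
  have hAz : ∀ (z : Fin n → ℝ) (i : Fin n), (A *ᵥ z) i = z i - (W *ᵥ z) i := by
    intro z i
    rw [hA, Matrix.sub_mulVec, Matrix.one_mulVec]; rfl
  have hiff : ∀ z : Fin n → ℝ,
      (z = fun i => max ((W.mulVec z + U.mulVec x + b) i) 0) ↔ F z = z := by
    intro z
    have hrw : ∀ i, (W.mulVec z + U.mulVec x + b) i = (W *ᵥ z) i + c i := by
      intro i; simp [hc, add_assoc]
    constructor
    · intro h
      funext i
      have hi : z i = max ((W *ᵥ z) i + c i) 0 := by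
        simpa only [hrw i] using congrFun h i
      have hii := (relu_shift (a := z i) (v := (W *ᵥ z) i + c i) hαpos).mp hi
      show max (z i - α * ((A *ᵥ z) i - c i)) 0 = z i
      rw [hAz z i, show z i - α * ((z i - (W *ᵥ z) i) - c i)
        = z i - α * (z i - ((W *ᵥ z) i + c i)) by ring]
      exact hii.symm
    · intro h
      funext i
      have hi : max (z i - α * ((A *ᵥ z) i - c i)) 0 = z i := congrFun h i
      rw [hrw i]
      refine (relu_shift (a := z i) (v := (W *ᵥ z) i + c i) hαpos).mpr ?_
      rw [show z i - α * (z i - ((W *ᵥ z) i + c i))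
        = z i - α * ((z i - (W *ᵥ z) i) - c i) by ring, ← hAz z i]
      exact hi.symm
  refine ⟨z₀, (hiff z₀).mpr hfix, ?_⟩
  intro y hy
  exact huniq y ((hiff y).mp hy)
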